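/- For all types σ, τ ∈ 𝕋 on which the translation ⟦·⟧ is defined (i.e. σ and τ contain neither the record-merge type constructor + nor labels outside 𝓛): σ = τ in 𝕋 (mutual subtyping with respect to the subtyping of 𝕋) if and only if ⟦σ⟧ = ⟦τ⟧ in 𝕋_C (mutual subtyping with respect to the subtyping of 𝕋_C). -/

import Mathlib

/-- Intersection and record types `𝕋`. Record types are the types satisfying `IsRec`. -/
inductive Ty where
  | const : Nat → Ty
  | omega : Ty
  | arrow : Ty → Ty → Ty
  | inter : Ty → Ty → Ty
  | empty : Ty
  | fld : Nat → Ty → Ty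
  | merge : Ty → Ty → Ty
deriving DecidableEq

/-- The record types `𝕋_R ⊆ 𝕋`. -/
inductive IsRec : Ty → Prop where
  | empty : IsRec .empty
  | fld (l : Nat) (σ : Ty) : IsRec (.fld l σ)
  | merge {ρ₁ ρ₂ : Ty} : IsRec ρ₁ → IsRec ρ₂ → IsRec (.merge ρ₁ ρ₂)
  | inter {ρ₁ ρ₂ : Ty} : IsRec ρ₁ → IsRec ρ₂ → IsRec (.inter ρ₁ ρ₂)

/-- Subtyping on `𝕋`: the least preorder satisfying the BCD axioms together with
the record and record-merge axioms. -/
inductive TySub : Ty → Ty → Prop where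
  | refl (σ : Ty) : TySub σ σ
  | trans {σ τ υ : Ty} : TySub σ τ → TySub τ υ → TySub σ υ
  | le_omega (σ : Ty) : TySub σ .omega
  | omega_arrow : TySub .omega (.arrow .omega .omega)
  | inter_left (σ τ : Ty) : TySub (.inter σ τ) σ
  | inter_right (σ τ : Ty) : TySub (.inter σ τ) τ
  | le_inter {σ τ₁ τ₂ : Ty} : TySub σ τ₁ → TySub σ τ₂ → TySub σ (.inter τ₁ τ₂)
  | arrow_inter (σ τ₁ τ₂ : Ty) :
      TySub (.inter (.arrow σ τ₁) (.arrow σ τ₂)) (.arrow σ (.inter τ₁ τ₂))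
  | arrow_mono {σ₁ σ₂ τ₁ τ₂ : Ty} : TySub σ₂ σ₁ → TySub τ₁ τ₂ →
      TySub (.arrow σ₁ τ₁) (.arrow σ₂ τ₂)
  | fld_empty (l : Nat) (σ : Ty) : TySub (.fld l σ) .empty
  | fld_inter (l : Nat) (σ τ : Ty) :
      TySub (.inter (.fld l σ) (.fld l τ)) (.fld l (.inter σ τ))
  | fld_mono {σ τ : Ty} (l : Nat) : TySub σ τ → TySub (.fld l σ) (.fld l τ)
  | merge_empty_r {ρ : Ty} : IsRec ρ → TySub (.merge ρ .empty) ρ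
  | merge_empty_r' {ρ : Ty} : IsRec ρ → TySub ρ (.merge ρ .empty)
  | merge_empty_l {ρ : Ty} : IsRec ρ → TySub (.merge .empty ρ) ρ
  | merge_empty_l' {ρ : Ty} : IsRec ρ → TySub ρ (.merge .empty ρ)
  | merge_assoc {ρ₁ ρ₂ ρ₃ : Ty} : IsRec ρ₁ → IsRec ρ₂ → IsRec ρ₃ →
      TySub (.merge (.merge ρ₁ ρ₂) ρ₃) (.merge ρ₁ (.merge ρ₂ ρ₃))
  | merge_assoc' {ρ₁ ρ₂ ρ₃ : Ty} : IsRec ρ₁ → IsRec ρ₂ → IsRec ρ₃ →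
      TySub (.merge ρ₁ (.merge ρ₂ ρ₃)) (.merge (.merge ρ₁ ρ₂) ρ₃)
  | merge_inter {ρ₁ ρ₂ ρ₃ : Ty} : IsRec ρ₁ → IsRec ρ₂ → IsRec ρ₃ →
      TySub (.merge (.inter ρ₁ ρ₂) ρ₃) (.inter (.merge ρ₁ ρ₃) (.merge ρ₂ ρ₃))
  | merge_inter' {ρ₁ ρ₂ ρ₃ : Ty} : IsRec ρ₁ → IsRec ρ₂ → IsRec ρ₃ →
      TySub (.inter (.merge ρ₁ ρ₃) (.merge ρ₂ ρ₃)) (.merge (.inter ρ₁ ρ₂) ρ₃)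
  | fld_absorb {ρ : Ty} (l : Nat) (σ τ : Ty) : IsRec ρ →
      TySub (.merge (.fld l σ) (.inter (.fld l τ) ρ)) (.inter (.fld l τ) ρ)
  | fld_absorb' {ρ : Ty} (l : Nat) (σ τ : Ty) : IsRec ρ →
      TySub (.inter (.fld l τ) ρ) (.merge (.fld l σ) (.inter (.fld l τ) ρ))
  | fld_comm {ρ : Ty} {l l' : Nat} (σ τ : Ty) : l ≠ l' → IsRec ρ →
      TySub (.merge (.fld l σ) (.inter (.fld l' τ) ρ))
          (.inter (.fld l' τ) (.merge (.fld l σ) ρ))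
  | fld_comm' {ρ : Ty} {l l' : Nat} (σ τ : Ty) : l ≠ l' → IsRec ρ →
      TySub (.inter (.fld l' τ) (.merge (.fld l σ) ρ))
          (.merge (.fld l σ) (.inter (.fld l' τ) ρ))
  | merge_mono_l {ρ₁ ρ₂ ρ : Ty} : IsRec ρ₁ → IsRec ρ₂ → IsRec ρ →
      TySub ρ₁ ρ₂ → TySub (.merge ρ₁ ρ) (.merge ρ₂ ρ)
  | merge_congr_r {ρ ρ₁ ρ₂ : Ty} : IsRec ρ → IsRec ρ₁ → IsRec ρ₂ →
      TySub ρ₁ ρ₂ → TySub ρ₂ ρ₁ → TySub (.merge ρ ρ₁) (.merge ρ ρ₂)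

/-- Type equality: mutual subtyping. -/
def TyEq (σ τ : Ty) : Prop := TySub σ τ ∧ TySub τ σ
/-- Intersection types with constructors `𝕋_C`: constants, type variables, `ω`,
arrows, intersections and unary constructors (constructor names in `Option ℕ`: `none` is the distinguished record constructor `⟨⟨·⟩⟩` and `some l` is the label constructor `l(·)` for a label `l`). -/
inductive TyC where
  | const : Nat → TyC
  | tvar : Nat → TyC
  | omega : TyC
  | arrow : TyC → TyC → TyC
  | inter : TyC → TyC → TyC
  | ctor : Option Nat → TyC → TyC
deriving DecidableEq

/-- Subtyping on `𝕋_C`: the least preorder with the BCD axioms together with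
covariance of constructors and distribution of constructors over intersection. -/
inductive SubC : TyC → TyC → Prop where
  | refl (σ : TyC) : SubC σ σ
  | trans {σ τ υ : TyC} : SubC σ τ → SubC τ υ → SubC σ υ
  | le_omega (σ : TyC) : SubC σ .omega
  | omega_arrow : SubC .omega (.arrow .omega .omega)
  | inter_left (σ τ : TyC) : SubC (.inter σ τ) σ
  | inter_right (σ τ : TyC) : SubC (.inter σ τ) τ
  | le_inter {σ τ₁ τ₂ : TyC} : SubC σ τ₁ → SubC σ τ₂ → SubC σ (.inter τ₁ τ₂)
  | arrow_inter (σ τ₁ τ₂ : TyC) :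
      SubC (.inter (.arrow σ τ₁) (.arrow σ τ₂)) (.arrow σ (.inter τ₁ τ₂))
  | arrow_mono {σ₁ σ₂ τ₁ τ₂ : TyC} : SubC σ₂ σ₁ → SubC τ₁ τ₂ →
      SubC (.arrow σ₁ τ₁) (.arrow σ₂ τ₂)
  | ctor_mono {τ₁ τ₂ : TyC} (c : Option Nat) : SubC τ₁ τ₂ → SubC (.ctor c τ₁) (.ctor c τ₂)
  | ctor_inter (c : Option Nat) (τ₁ τ₂ : TyC) :
      SubC (.inter (.ctor c τ₁) (.ctor c τ₂)) (.ctor c (.inter τ₁ τ₂))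

/-- Type equality on `𝕋_C`: mutual subtyping. -/
def TyCEq (σ τ : TyC) : Prop := SubC σ τ ∧ SubC τ σ

/-- Finite intersection of a list of `𝕋_C` types (`ω` for the empty list). -/
def interListC : List TyC → TyC
  | [] => .omega
  | [π] => π
  | π :: π' :: rest => .inter π (interListC (π' :: rest))
/-- The partial translation `⟦·⟧ : 𝕋 → 𝕋_C` relative to the finite label set `𝓛`:
defined homomorphically on constants, `ω`, arrows and intersections, with
`⟦⟨l:τ⟩⟧ = ⟨⟨l(⟦τ⟧)⟩⟩` for `l ∈ 𝓛` and `⟦⟨⟩⟧ = ⟨⟨ω⟩⟩`; undefined (`none`) on types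
containing the record-merge type constructor `+` or a label outside `𝓛`. -/
def interp (L : Finset Nat) : Ty → Option TyC
  | .const a => some (.const a)
  | .omega => some .omega
  | .arrow σ τ => do
      let s ← interp L σ
      let t ← interp L τ
      pure (.arrow s t)
  | .inter σ τ => do
      let s ← interp L σ
      let t ← interp L τ
      pure (.inter s t)
  | .empty => some (.ctor none .omega)
  | .fld l σ =>
      if l ∈ L then (interp L σ).map (fun t => .ctor none (.ctor (some l) t))
      else none
  | .merge _ _ => none

/-! ### Auxiliary development -/

/-- Labels occurring at the top level of a translated record type. -/
def lbls : TyC → Finset Nat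
  | .inter a b => lbls a ∪ lbls b
  | .ctor none (.ctor (some l) _) => {l}
  | _ => ∅

/-- Restriction: replace top-level fields with labels in `S` by `⟨⟨ω⟩⟩`. -/
def rC : TyC → Finset Nat → TyC
  | .inter a b, S => .inter (rC a S) (rC b S)
  | .ctor none (.ctor (some l) t), S =>
      if l ∈ S then .ctor none .omega else .ctor none (.ctor (some l) t)
  | a, _ => a

/-- Total translation `Ty → TyC`, eliminating merges. -/
def T : Ty → TyC
  | .const a => .const a
  | .omega => .omega
  | .arrow s t => .arrow (T s) (T t)
  | .inter s t => .inter (T s) (T t)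
  | .empty => .ctor none .omega
  | .fld l s => .ctor none (.ctor (some l) (T s))
  | .merge a b => .inter (T b) (rC (T a) (lbls (T b)))

lemma rC_empty (a : TyC) : rC a ∅ = a := by
  induction a with
  | inter a b iha ihb => simp [rC, iha, ihb]
  | ctor c t ih =>
      cases c with
      | none =>
          cases t with
          | ctor c' u => cases c' <;> simp [rC]
          | _ => simp [rC]
      | some l => simp [rC]
  | _ => simp [rC]

lemma rC_comp (a : TyC) (S S' : Finset Nat) :
    rC (rC a S) S' = rC a (S ∪ S') := by
  induction a with
  | inter a b iha ihb => simp [rC, iha, ihb]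
  | ctor c t ih =>
      cases c with
      | none =>
          cases t with
          | ctor c' u =>
              cases c' with
              | none => simp [rC]
              | some l =>
                  by_cases h : l ∈ S
                  · simp [rC, h]
                  · by_cases h' : l ∈ S' <;> simp [rC, h, h']
          | _ => simp [rC]
      | some l => simp [rC]
  | _ => simp [rC]

lemma lbls_rC (a : TyC) (S : Finset Nat) : lbls (rC a S) = lbls a \ S := by
  induction a with
  | inter a b iha ihb => simp [rC, lbls, iha, ihb, Finset.union_sdiff_distrib]
  | ctor c t ih =>
      cases c with
      | none =>
          cases t with
          | ctor c' u =>
              cases c' with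
              | none => simp [rC, lbls]
              | some l =>
                  by_cases h : l ∈ S
                  · simp only [rC, lbls, if_pos h]
                    ext x; simp; rintro rfl; exact h
                  · simp only [rC, lbls, if_neg h]
                    ext x; simp; rintro rfl; exact h
          | _ => simp [rC, lbls]
      | some l => simp [rC, lbls]
  | _ => simp [rC, lbls]

lemma lbls_merge (a b : Ty) :
    lbls (T (.merge a b)) = lbls (T a) ∪ lbls (T b) := by
  simp only [T, lbls, lbls_rC]
  rw [Finset.union_comm]
  exact Finset.sdiff_union_self_eq_union

namespace SubC

lemma left' {a b c : TyC} (h : SubC a c) : SubC (.inter a b) c :=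
  .trans (.inter_left a b) h

lemma right' {a b c : TyC} (h : SubC b c) : SubC (.inter a b) c :=
  .trans (.inter_right a b) h

lemma inter_mono {a a' b b' : TyC} (h1 : SubC a a') (h2 : SubC b b') :
    SubC (.inter a b) (.inter a' b') :=
  .le_inter (left' h1) (right' h2)

lemma assoc1 (x y z : TyC) :
    SubC (.inter x (.inter y z)) (.inter (.inter x y) z) :=
  .le_inter (.le_inter (.inter_left _ _) (right' (.inter_left _ _)))
    (right' (.inter_right _ _))

lemma assoc2 (x y z : TyC) :
    SubC (.inter (.inter x y) z) (.inter x (.inter y z)) :=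
  .le_inter (left' (.inter_left _ _))
    (.le_inter (left' (.inter_right _ _)) (.inter_right _ _))

lemma distrib1 (x y z : TyC) :
    SubC (.inter x (.inter y z)) (.inter (.inter x y) (.inter x z)) :=
  .le_inter (.le_inter (.inter_left _ _) (right' (.inter_left _ _)))
    (.le_inter (.inter_left _ _) (right' (.inter_right _ _)))

lemma distrib2 (x y z : TyC) :
    SubC (.inter (.inter x y) (.inter x z)) (.inter x (.inter y z)) :=
  .le_inter (left' (.inter_left _ _))
    (.le_inter (left' (.inter_right _ _)) (right' (.inter_right _ _)))

end SubC

lemma rC_merge (a b : Ty) (S : Finset Nat) :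
    rC (T (.merge a b)) S = .inter (rC (T b) S) (rC (T a) (lbls (T b) ∪ S)) := by
  simp [T, rC, rC_comp]

/-- Any (translated, restricted) record type is `≤ ⟨⟨ω⟩⟩`. -/
lemma recOmega {ρ : Ty} (h : IsRec ρ) (S : Finset Nat) :
    SubC (rC (T ρ) S) (.ctor none .omega) := by
  induction h generalizing S with
  | empty => exact .refl _
  | fld l σ =>
      by_cases hl : l ∈ S
      · simp only [T, rC, if_pos hl]; exact .refl _
      · simp only [T, rC, if_neg hl]; exact .ctor_mono none (.le_omega _)
  | merge h1 h2 ih1 ih2 => rw [rC_merge]; exact SubC.left' (ih2 S)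
  | inter h1 h2 ih1 ih2 => exact SubC.left' (ih1 S)

/-- Labels are antitone along subtyping. -/
lemma lbls_anti {a b : Ty} (h : TySub a b) : lbls (T b) ⊆ lbls (T a) := by
  induction h with
  | refl => exact Finset.Subset.refl _
  | trans h1 h2 ih1 ih2 => exact ih2.trans ih1
  | inter_left σ τ => simp only [T, lbls]; exact Finset.subset_union_left
  | inter_right σ τ => simp only [T, lbls]; exact Finset.subset_union_right
  | le_inter h1 h2 ih1 ih2 => simp only [T, lbls]; exact Finset.union_subset ih1 ih2
  | merge_mono_l h1 h2 h3 h ih =>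
      simp only [lbls_merge]
      exact Finset.union_subset_union_left ih
  | merge_congr_r h1 h2 h3 hs1 hs2 ih1 ih2 =>
      simp only [lbls_merge]
      exact Finset.union_subset_union_right ih1
  | _ =>
      simp only [T, lbls, lbls_rC, Finset.subset_iff]
      intro x hx <;> simp at hx ⊢ <;> tauto

/-- Soundness: `TySub` is preserved by the (restricted) total translation. -/
lemma main_sub {a b : Ty} (h : TySub a b) :
    ∀ S : Finset Nat, SubC (rC (T a) S) (rC (T b) S) := by
  induction h with
  | refl => exact fun S => .refl _
  | trans h1 h2 ih1 ih2 => exact fun S => .trans (ih1 S) (ih2 S)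
  | le_omega σ => exact fun S => .le_omega _
  | omega_arrow => exact fun S => .omega_arrow
  | inter_left σ τ => exact fun S => .inter_left _ _
  | inter_right σ τ => exact fun S => .inter_right _ _
  | le_inter h1 h2 ih1 ih2 => exact fun S => .le_inter (ih1 S) (ih2 S)
  | arrow_inter σ τ₁ τ₂ => exact fun S => .arrow_inter _ _ _
  | arrow_mono h1 h2 ih1 ih2 =>
      intro S
      have e1 := ih1 ∅; have e2 := ih2 ∅
      rw [rC_empty, rC_empty] at e1 e2
      exact .arrow_mono e1 e2
  | fld_empty l σ =>
      intro S
      by_cases hl : l ∈ S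
      · simp only [T, rC, if_pos hl]; exact .refl _
      · simp only [T, rC, if_neg hl]; exact .ctor_mono none (.le_omega _)
  | fld_inter l σ τ =>
      intro S
      by_cases hl : l ∈ S
      · simp only [T, rC, if_pos hl]; exact SubC.left' (.refl _)
      · simp only [T, rC, if_neg hl]
        exact .trans (.ctor_inter none _ _) (.ctor_mono none (.ctor_inter (some l) _ _))
  | fld_mono l h ih =>
      intro S
      by_cases hl : l ∈ S
      · simp only [T, rC, if_pos hl]; exact .refl _
      · simp only [T, rC, if_neg hl]
        have e := ih ∅; rw [rC_empty, rC_empty] at e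
        exact .ctor_mono none (.ctor_mono (some l) e)
  | merge_empty_r h =>
      intro S
      rw [rC_merge]
      simp only [T, lbls, rC, Finset.empty_union]
      exact SubC.right' (.refl _)
  | merge_empty_r' h =>
      intro S
      rw [rC_merge]
      simp only [T, lbls, rC, Finset.empty_union]
      exact .le_inter (recOmega h S) (.refl _)
  | merge_empty_l h =>
      intro S
      rw [rC_merge]
      simp only [T, rC]
      exact SubC.left' (.refl _)
  | merge_empty_l' h =>
      intro S
      rw [rC_merge]
      simp only [T, rC]
      exact .le_inter (.refl _) (recOmega h _)
  | merge_assoc h1 h2 h3 =>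
      rename_i ρ₁ ρ₂ ρ₃
      intro S
      simp only [rC_merge, lbls_merge, Finset.union_assoc]
      exact SubC.assoc1 _ _ _
  | merge_assoc' h1 h2 h3 =>
      rename_i ρ₁ ρ₂ ρ₃
      intro S
      simp only [rC_merge, lbls_merge, Finset.union_assoc]
      exact SubC.assoc2 _ _ _
  | merge_inter h1 h2 h3 =>
      intro S
      simp only [rC_merge, T, rC, lbls]
      exact SubC.distrib1 _ _ _
  | merge_inter' h1 h2 h3 =>
      intro S
      simp only [rC_merge, T, rC, lbls]
      exact SubC.distrib2 _ _ _
  | fld_absorb l σ τ h =>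
      rename_i ρ
      intro S
      rw [rC_merge]
      simp only [T, lbls, rC]
      rw [if_pos (by simp : l ∈ ({l} ∪ lbls (T ρ)) ∪ S)]
      exact SubC.left' (.refl _)
  | fld_absorb' l σ τ h =>
      rename_i ρ
      intro S
      rw [rC_merge]
      simp only [T, lbls, rC]
      rw [if_pos (by simp : l ∈ ({l} ∪ lbls (T ρ)) ∪ S)]
      exact .le_inter (.refl _) (SubC.right' (recOmega h S))
  | fld_comm σ τ hne h =>
      rename_i ρ l l'
      intro S
      simp only [T, rC_merge, rC, lbls]
      have e : rC (if l ∈ {l'} ∪ lbls (T ρ) then (.ctor none .omega : TyC)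
              else .ctor none (.ctor (some l) (T σ))) S
          = rC (if l ∈ lbls (T ρ) then (.ctor none .omega : TyC)
              else .ctor none (.ctor (some l) (T σ))) S := by
        by_cases hl : l ∈ lbls (T ρ)
        · rw [if_pos hl, if_pos (by simp [hl])]
        · rw [if_neg hl, if_neg (by simp [hl]; exact hne)]
      rw [e]
      exact SubC.assoc2 _ _ _
  | fld_comm' σ τ hne h =>
      rename_i ρ l l'
      intro S
      simp only [T, rC_merge, rC, lbls]
      have e : rC (if l ∈ {l'} ∪ lbls (T ρ) then (.ctor none .omega : TyC)
              else .ctor none (.ctor (some l) (T σ))) S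
          = rC (if l ∈ lbls (T ρ) then (.ctor none .omega : TyC)
              else .ctor none (.ctor (some l) (T σ))) S := by
        by_cases hl : l ∈ lbls (T ρ)
        · rw [if_pos hl, if_pos (by simp [hl])]
        · rw [if_neg hl, if_neg (by simp [hl]; exact hne)]
      rw [e]
      exact SubC.assoc1 _ _ _
  | merge_mono_l h1 h2 h3 h ih =>
      intro S
      simp only [rC_merge]
      exact SubC.inter_mono (.refl _) (ih _)
  | merge_congr_r h1 h2 h3 hs1 hs2 ih1 ih2 =>
      intro S
      simp only [rC_merge]
      rename_i ρ ρ₁ ρ₂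
      have e : lbls (T ρ₁) = lbls (T ρ₂) :=
        Finset.Subset.antisymm (lbls_anti hs2) (lbls_anti hs1)
      rw [e]
      exact SubC.inter_mono (ih1 S) (.refl _)

mutual
/-- Inverse translation `TyC → Ty`. -/
def U : TyC → Ty
  | .const n => .const n
  | .tvar n => .const n
  | .omega => .omega
  | .arrow a b => .arrow (U a) (U b)
  | .inter a b => .inter (U a) (U b)
  | .ctor (some l) t => .fld l (U t)
  | .ctor none t => R t

/-- Inverse translation of record bodies. -/
def R : TyC → Ty
  | .inter a b => .inter (R a) (R b)
  | .ctor (some l) t => .fld l (U t)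
  | _ => .empty
end

lemma R_le_empty (a : TyC) : TySub (R a) .empty := by
  induction a with
  | inter a b iha ihb => exact .trans (.inter_left _ _) iha
  | ctor c t ih => cases c with
    | some l => exact .fld_empty _ _
    | none => exact .refl _
  | _ => exact .refl _

lemma conv {a b : TyC} (h : SubC a b) : TySub (U a) (U b) ∧ TySub (R a) (R b) := by
  induction h with
  | refl => exact ⟨.refl _, .refl _⟩
  | trans h1 h2 ih1 ih2 => exact ⟨.trans ih1.1 ih2.1, .trans ih1.2 ih2.2⟩
  | le_omega σ => exact ⟨.le_omega _, R_le_empty σ⟩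
  | omega_arrow => exact ⟨.omega_arrow, .refl _⟩
  | inter_left σ τ => exact ⟨.inter_left _ _, .inter_left _ _⟩
  | inter_right σ τ => exact ⟨.inter_right _ _, .inter_right _ _⟩
  | le_inter h1 h2 ih1 ih2 => exact ⟨.le_inter ih1.1 ih2.1, .le_inter ih1.2 ih2.2⟩
  | arrow_inter σ τ₁ τ₂ => exact ⟨.arrow_inter _ _ _, .inter_left _ _⟩
  | arrow_mono h1 h2 ih1 ih2 => exact ⟨.arrow_mono ih1.1 ih2.1, .refl _⟩
  | ctor_mono c h ih => cases c with
    | some l => exact ⟨.fld_mono _ ih.1, .fld_mono _ ih.1⟩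
    | none => exact ⟨ih.2, .refl _⟩
  | ctor_inter c τ₁ τ₂ => cases c with
    | some l => exact ⟨.fld_inter _ _ _, .fld_inter _ _ _⟩
    | none => exact ⟨.refl _, .inter_left _ _⟩

lemma U_interp {L : Finset Nat} : ∀ {σ : Ty} {σ' : TyC},
    interp L σ = some σ' → U σ' = σ := by
  intro σ
  induction σ with
  | const a => intro σ' h; simp [interp] at h; subst h; rfl
  | omega => intro σ' h; simp [interp] at h; subst h; rfl
  | arrow s t ihs iht =>
      intro σ' h
      simp only [interp, Option.bind_eq_bind, bind, Option.bind_eq_some_iff] at h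
      obtain ⟨x, hx, y, hy, he⟩ := h
      cases he
      simp [U, ihs hx, iht hy]
  | inter s t ihs iht =>
      intro σ' h
      simp only [interp, Option.bind_eq_bind, bind, Option.bind_eq_some_iff] at h
      obtain ⟨x, hx, y, hy, he⟩ := h
      cases he
      simp [U, ihs hx, iht hy]
  | empty => intro σ' h; simp [interp] at h; subst h; rfl
  | fld l s ih =>
      intro σ' h
      simp only [interp] at h
      split at h
      · simp only [Option.map_eq_some_iff] at h
        obtain ⟨x, hx, he⟩ := h
        subst he
        simp [U, R, ih hx]
      · exact absurd h (by simp)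
  | merge a b iha ihb => intro σ' h; simp [interp] at h

lemma T_interp {L : Finset Nat} : ∀ {σ : Ty} {σ' : TyC},
    interp L σ = some σ' → T σ = σ' := by
  intro σ
  induction σ with
  | const a => intro σ' h; simp [interp] at h; subst h; rfl
  | omega => intro σ' h; simp [interp] at h; subst h; rfl
  | arrow s t ihs iht =>
      intro σ' h
      simp only [interp, Option.bind_eq_bind, bind, Option.bind_eq_some_iff] at h
      obtain ⟨x, hx, y, hy, he⟩ := h
      cases he
      simp [T, ihs hx, iht hy]
  | inter s t ihs iht =>
      intro σ' h
      simp only [interp, Option.bind_eq_bind, bind, Option.bind_eq_some_iff] at h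
      obtain ⟨x, hx, y, hy, he⟩ := h
      cases he
      simp [T, ihs hx, iht hy]
  | empty => intro σ' h; simp [interp] at h; subst h; rfl
  | fld l s ih =>
      intro σ' h
      simp only [interp] at h
      split at h
      · simp only [Option.map_eq_some_iff] at h
        obtain ⟨x, hx, he⟩ := h
        subst he
        simp [T, ih hx]
      · exact absurd h (by simp)
  | merge a b iha ihb => intro σ' h; simp [interp] at h
/-- For types `σ, τ ∈ 𝕋` on which the translation `⟦·⟧` is defined:
`σ = τ` in `𝕋` iff `⟦σ⟧ = ⟦τ⟧` in `𝕋_C` (mutual subtyping on either side). -/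
theorem interp_preserves_eq (L : Finset Nat) (σ τ : Ty) (σ' τ' : TyC)
    (hσ : interp L σ = some σ') (hτ : interp L τ = some τ') :
    TyEq σ τ ↔ TyCEq σ' τ' := by
  constructor
  · rintro ⟨h1, h2⟩
    have e1 := main_sub h1 ∅
    have e2 := main_sub h2 ∅
    rw [rC_empty, rC_empty, T_interp hσ, T_interp hτ] at e1 e2
    exact ⟨e1, e2⟩
  · rintro ⟨h1, h2⟩
    have e1 := (conv h1).1
    have e2 := (conv h2).1
    rw [U_interp hσ, U_interp hτ] at e1 e2
    exact ⟨e1, e2⟩
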